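/- arXiv:0811.2895 — 4 statements merged into one kernel-verified Lean document; each statement's English description precedes it below -/
import Mathlib

section
/- Let V be a vector space over an infinite field K. Suppose V is written as a union V = ⋃_{i∈I} W_i of proper linear K-subspaces W_i of V such that the supremum sup_{i∈I} dim_K(W_i) is finite. Then the index set satisfies |I| ≥ |K|. -/
universe u v w

open Cardinal

/-- Auxiliary covering lemma, proved by induction on a bound `n` for the rank of `U`:
if a nonzero submodule `U` of rank `≤ n` is covered by subspaces `g i ≤ U` with
`g i ≠ U`, then `|K| ≤ |ι|`. -/
private theorem auxcov {K : Type u} {V : Type v} [Field K] [Infinite K]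
    [AddCommGroup V] [Module K V] (n : ℕ) :
    ∀ {ι : Type w} (U : Submodule K V) (g : ι → Submodule K V),
      (∀ i, g i ≤ U) → (∀ i, g i ≠ U) → (∀ u ∈ U, ∃ i, u ∈ g i) →
      Module.rank K ↥U ≤ n → U ≠ ⊥ →
      Cardinal.lift.{w} (Cardinal.mk K) ≤ Cardinal.lift.{u} (Cardinal.mk ι) := by
  induction n with
  | zero =>
    intro ι U g hle hne hcov hrank hbot
    refine absurd ?_ hbot
    rw [← Submodule.rank_eq_zero (R := K) (M := V)]
    exact le_antisymm (by exact_mod_cast hrank) (zero_le)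
  | succ n IH =>
    intro ι U g hle hne hcov hrank hbot
    by_cases hpair : ∃ u ∈ U, ∃ v ∈ U, ∀ i, ¬ (u ∈ g i ∧ v ∈ g i)
    · obtain ⟨u, hu, v, hv, hp⟩ := hpair
      choose F hF using fun t : K => hcov (u + t • v) (U.add_mem hu (U.smul_mem t hv))
      have hinj : Function.Injective F := by
        intro t₁ t₂ h
        by_contra hts
        have h1 := hF t₁
        have h2 := hF t₂
        rw [h] at h1
        have hsub : (t₁ - t₂) • v ∈ g (F t₂) := by
          have := Submodule.sub_mem _ h1 h2
          have heq : u + t₁ • v - (u + t₂ • v) = (t₁ - t₂) • v := by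
            rw [sub_smul]; abel
          rwa [heq] at this
        have hvmem : v ∈ g (F t₂) := by
          have := Submodule.smul_mem _ (t₁ - t₂)⁻¹ hsub
          rwa [smul_smul, inv_mul_cancel₀ (sub_ne_zero.mpr hts), one_smul] at this
        have humem : u ∈ g (F t₂) := by
          have := Submodule.sub_mem _ h2 (Submodule.smul_mem _ t₂ hvmem)
          simpa using this
        exact hp (F t₂) ⟨humem, hvmem⟩
      exact Cardinal.lift_mk_le'.mpr ⟨⟨F, hinj⟩⟩
    · push_neg at hpair
      have hUfin : Module.Finite K ↥U :=
        Module.rank_lt_aleph0_iff.mp (hrank.trans_lt (Cardinal.nat_lt_aleph0 _))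
      have hgfin : ∀ i, Module.Finite K ↥(g i) := fun i =>
        Submodule.finiteDimensional_of_le (hle i)
      have hιne : Nonempty ι := (hcov 0 U.zero_mem).elim fun i _ => ⟨i⟩
      have hfinU : Module.finrank K ↥U ≤ n + 1 := Module.finrank_le_of_rank_le hrank
      set r : ι → ℕ := fun i => Module.finrank K ↥(g i) with hr
      have hbdd : BddAbove (Set.range r) := by
        refine ⟨n + 1, ?_⟩
        rintro _ ⟨i, rfl⟩
        have := hgfin i
        exact (Submodule.finrank_mono (hle i)).trans hfinU
      obtain ⟨imax, himax⟩ := Nat.sSup_mem (Set.range_nonempty r) hbdd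
      have hmax : ∀ i, r i ≤ r imax := fun i => himax ▸ le_csSup hbdd ⟨i, rfl⟩
      have hgmaxfin := hgfin imax
      have hgmaxne : g imax ≠ ⊥ := by
        intro hb
        apply hbot
        rw [Submodule.eq_bot_iff]
        intro x hx
        obtain ⟨i, hi⟩ := hcov x hx
        have h0 : r i = 0 := by
          have hm0 : r imax = 0 := Submodule.finrank_eq_zero.mpr hb
          have := hmax i
          omega
        have := hgfin i
        have : g i = ⊥ := Submodule.finrank_eq_zero.mp h0
        rw [this] at hi
        exact hi
      have hlt : g imax < U := lt_of_le_of_ne (hle imax) (hne imax)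
      obtain ⟨v, hvU, hvn⟩ := SetLike.exists_of_lt hlt
      have hrank' : Module.rank K ↥(g imax) ≤ (n : Cardinal) := by
        have h1 : r imax < Module.finrank K ↥U :=
          Submodule.finrank_lt_finrank_of_lt hlt
        have h2 : r imax ≤ n := by omega
        rw [← Module.finrank_eq_rank]
        exact_mod_cast h2
      have key := IH (ι := {i : ι // v ∈ g i}) (g imax)
        (fun j => g j.1 ⊓ g imax)
        (fun j => inf_le_right)
        (fun j hEq => by
          have hsub : g imax ≤ g j.1 := inf_eq_right.mp hEq
          have := hgfin j.1
          have heq : g imax = g j.1 :=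
            Submodule.eq_of_le_of_finrank_le hsub (hmax j.1)
          exact hvn (heq ▸ j.2))
        (fun u hu => by
          obtain ⟨i, hui, hvi⟩ := hpair u (hle imax hu) v hvU
          exact ⟨⟨i, hvi⟩, Submodule.mem_inf.mpr ⟨hui, hu⟩⟩)
        hrank' hgmaxne
      exact key.trans (Cardinal.lift_le.mpr (Cardinal.mk_subtype_le _))

/-- **Lemma 1 (linear algebra).**
Let `V` be a vector space over an infinite field `K`.  Suppose `V` is the union
`V = ⋃_{i ∈ I} W i` of proper linear subspaces `W i` of `V` such that
`sup_{i ∈ I} dim_K (W i)` is finite.  Then `|I| ≥ |K|`. -/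
theorem stmt_0 {K : Type u} {V : Type v} {I : Type w}
    [Field K] [Infinite K] [AddCommGroup V] [Module K V]
    (W : I → Submodule K V)
    (hproper : ∀ i, W i ≠ ⊤)
    (hcover : ∀ v : V, ∃ i, v ∈ W i)
    (hsup : (⨆ i, Module.rank K ↥(W i)) < Cardinal.aleph0) :
    Cardinal.lift.{w} (Cardinal.mk K) ≤ Cardinal.lift.{u} (Cardinal.mk I) := by
  obtain ⟨n, hn⟩ := Cardinal.lt_aleph0.mp hsup
  have hbddW : BddAbove (Set.range fun i => Module.rank K ↥(W i)) := by
    refine ⟨Module.rank K V, ?_⟩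
    rintro _ ⟨i, rfl⟩
    exact Submodule.rank_le _
  have hWn : ∀ i, Module.rank K ↥(W i) ≤ n := fun i =>
    (le_csSup hbddW (Set.mem_range_self i)).trans hn.le
  obtain ⟨i₀, -⟩ := hcover 0
  obtain ⟨x, -, hx⟩ := SetLike.exists_of_lt ((hproper i₀).lt_top)
  have hx0 : x ≠ 0 := fun h => hx (h ▸ (W i₀).zero_mem)
  by_cases hV : Module.rank K V ≤ n
  · refine auxcov n ⊤ W (fun i => le_top) hproper (fun u _ => hcover u) ?_ ?_
    · rwa [rank_top]
    · intro h
      exact hx0 ((Submodule.mem_bot K).mp (h ▸ Submodule.mem_top (x := x)))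
  · have hlt : (n : Cardinal) < Module.rank K V := lt_of_not_ge hV
    have hsucc : ((n + 1 : ℕ) : Cardinal) ≤ Module.rank K V := by
      have h := Order.succ_le_of_lt hlt
      rw [← Cardinal.nat_succ] at h
      exact_mod_cast h
    obtain ⟨s, hcard, hli⟩ := le_rank_iff_exists_linearIndependent_finset.mp hsucc
    set U : Submodule K V := Submodule.span K (s : Set V) with hU
    have hrankU : Module.rank K ↥U = ((n + 1 : ℕ) : Cardinal) := by
      rw [hU, rank_span_set hli]
      simp [hcard]
    have hUne : ∀ i, W i ⊓ U ≠ U := by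
      intro i hEq
      have hsub : U ≤ W i := inf_eq_right.mp hEq
      have : Module.rank K ↥U ≤ Module.rank K ↥(W i) := Submodule.rank_mono hsub
      rw [hrankU] at this
      have := this.trans (hWn i)
      exact absurd (by exact_mod_cast this) (by omega)
    refine auxcov (n + 1) U (fun i => W i ⊓ U) (fun i => inf_le_right) hUne
      (fun u hu => ?_) ?_ ?_
    · obtain ⟨i, hi⟩ := hcover u
      exact ⟨i, Submodule.mem_inf.mpr ⟨hi, hu⟩⟩
    · rw [hrankU]
    · intro h
      rw [h, rank_bot] at hrankU
      exact absurd hrankU.symm (by exact_mod_cast Nat.succ_ne_zero n)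
end

section
/- Let V be a finite-dimensional vector space over an infinite field K with dim_K(V) ≥ 1. If V is a union of fewer than |K| proper linear subspaces each of dimension strictly less than dim_K(V), then a contradiction arises; equivalently, V cannot be covered by fewer than |K| proper subspaces. -/
/-- Auxiliary lemma: a finite-dimensional vector space over `K` cannot be covered
by fewer than `|K|` submodules that are all different from `⊤`. Proved by
induction on the dimension. -/
theorem stmt_1_aux {K : Type u} {I : Type w} [Field K]
    (hfew : Cardinal.lift.{u} (Cardinal.mk I) < Cardinal.lift.{w} (Cardinal.mk K)) :
    ∀ (n : ℕ) {V : Type v} [AddCommGroup V] [Module K V] [FiniteDimensional K V],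
      Module.finrank K V = n → ∀ W : I → Submodule K V, (∀ i, W i ≠ ⊤) →
      ∃ v : V, ∀ i, v ∉ W i := by
  intro n
  induction n with
  | zero =>
    intro V _ _ _ hn W hW
    have hsub : Subsingleton V := by
      have := Module.finrank_zero_iff (R := K) (M := V)
      exact this.mp hn
    refine ⟨0, fun i hi => hW i ?_⟩
    ext x
    simp only [Submodule.mem_top, iff_true]
    have : x = (0 : V) := Subsingleton.elim _ _
    rw [this]; exact (W i).zero_mem
  | succ n ih =>
    intro V _ _ _ hn W hW
    have hnt : Nontrivial V :=
      Module.nontrivial_of_finrank_pos (R := K) (by omega : 0 < Module.finrank K V)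
    obtain ⟨w, hw0⟩ := exists_ne (0 : V)
    set S : Submodule K V := Submodule.span K {w} with hS
    -- key step: find u avoiding every W i that contains w
    have key : ∃ u : V, ∀ i, w ∈ W i → u ∉ W i := by
      by_cases hStop : S = ⊤
      · refine ⟨0, fun i hwi => absurd ?_ (hW i)⟩
        have hle : S ≤ W i := Submodule.span_le.mpr (by simpa using hwi)
        rw [hStop] at hle
        exact top_le_iff.mp hle
      · have hQnt : Nontrivial (V ⧸ S) :=
          Submodule.Quotient.nontrivial_iff.mpr hStop
        have hrS : Module.finrank K S = 1 := finrank_span_singleton hw0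
        have hrQ : Module.finrank K (V ⧸ S) = n := by
          have := Submodule.finrank_quotient_add_finrank S
          omega
        classical
        set W' : I → Submodule K (V ⧸ S) :=
          fun i => if w ∈ W i then (W i).map S.mkQ else ⊥ with hW'
        have hW'ne : ∀ i, W' i ≠ ⊤ := by
          intro i
          by_cases hwi : w ∈ W i
          · simp only [hW', if_pos hwi]
            intro htop
            have hcm : Submodule.comap S.mkQ ((W i).map S.mkQ) = S ⊔ W i :=
              Submodule.comap_map_mkQ S (W i)
            rw [htop, Submodule.comap_top] at hcm
            have hle : S ≤ W i := Submodule.span_le.mpr (by simpa using hwi)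
            have : W i = ⊤ := by
              rw [← sup_eq_right.mpr hle, ← hcm]
            exact hW i this
          · simp only [hW', if_neg hwi]
            exact bot_ne_top
        obtain ⟨q, hq⟩ := ih hrQ W' hW'ne
        obtain ⟨u, hu⟩ := S.mkQ_surjective q
        refine ⟨u, fun i hwi hui => hq i ?_⟩
        simp only [hW', if_pos hwi]
        exact ⟨u, hui, hu⟩
    obtain ⟨u, hu⟩ := key
    by_contra hc
    push_neg at hc
    -- every point of the line u + t • w lies in some W i; build an injection K ↪ I
    have hinj : Function.Injective (fun t : K => (hc (u + t • w)).choose) := by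
      intro t₁ t₂ hf
      by_contra hne
      set i := (hc (u + t₁ • w)).choose with hi
      have h1 : u + t₁ • w ∈ W i := (hc (u + t₁ • w)).choose_spec
      have h2 : u + t₂ • w ∈ W i := by
        have := (hc (u + t₂ • w)).choose_spec
        simpa [← hf] using this
      have hdiff : (t₁ - t₂) • w ∈ W i := by
        have := (W i).sub_mem h1 h2
        have heq : (u + t₁ • w) - (u + t₂ • w) = (t₁ - t₂) • w := by
          rw [sub_smul]; abel
        rwa [heq] at this
      have htne : t₁ - t₂ ≠ 0 := sub_ne_zero.mpr hne
      have hwi : w ∈ W i := by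
        have := (W i).smul_mem (t₁ - t₂)⁻¹ hdiff
        rwa [inv_smul_smul₀ htne] at this
      have hui : u ∈ W i := by
        have := (W i).sub_mem h1 ((W i).smul_mem t₁ hwi)
        simpa using this
      exact hu i hwi hui
    have hle : Cardinal.lift.{w} (Cardinal.mk K) ≤ Cardinal.lift.{u} (Cardinal.mk I) :=
      Cardinal.lift_mk_le'.mpr ⟨⟨_, hinj⟩⟩
    exact absurd hle (not_le.mpr hfew)

/-- Let `V` be a finite-dimensional vector space over an infinite field `K` with
`dim_K V ≥ 1`.  If `V` is the union of fewer than `|K|` linear subspaces, each of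
dimension strictly smaller than `dim_K V` (i.e. proper subspaces), then a
contradiction arises; equivalently, `V` cannot be covered by fewer than `|K|`
proper subspaces. -/
theorem stmt_1 {K : Type u} {V : Type v} {I : Type w}
    [Field K] [Infinite K] [AddCommGroup V] [Module K V] [FiniteDimensional K V]
    (hdim : 1 ≤ Module.finrank K V)
    (W : I → Submodule K V)
    (hlt : ∀ i, Module.finrank K ↥(W i) < Module.finrank K V)
    (hfew : Cardinal.lift.{u} (Cardinal.mk I) < Cardinal.lift.{w} (Cardinal.mk K))
    (hcover : ∀ v : V, ∃ i, v ∈ W i) :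
    False := by
  have hWne : ∀ i, W i ≠ ⊤ := by
    intro i htop
    have := hlt i
    rw [htop, finrank_top] at this
    exact lt_irrefl _ this
  obtain ⟨v, hv⟩ := stmt_1_aux hfew (Module.finrank K V) rfl W hWne
  obtain ⟨i, hi⟩ := hcover v
  exact hv i hi
end

section
/- Let K be an ample field, f ∈ K[X,Y] an absolutely irreducible polynomial, and y₀ ∈ K with f(0,y₀) = 0 and ∂f/∂Y(0,y₀) ≠ 0. Let C denote the affine plane curve defined by f(x,y) = 0 and π : C → 𝔸¹ the projection (x,y) ↦ x. Then K = { x₁/x₂ : (x₁,y₁), (x₂,y₂) ∈ C(K), x₂ ≠ 0 }, i.e. every element of K is a quotient of two first coordinates of K-rational points of C. -/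
open MvPolynomial

/-- A field `K` is *ample* (large) iff it is existentially closed in the field of
formal Laurent series `K((t))`: every finite system of polynomial equations over
`K` with a solution in `K((t))` already has a solution in `K`. -/
def IsAmpleField (K : Type*) [Field K] : Prop :=
  ∀ (n k : ℕ) (f : Fin k → MvPolynomial (Fin n) K),
    (∃ x : Fin n → LaurentSeries K, ∀ i, aeval x (f i) = 0) →
    ∃ x : Fin n → K, ∀ i, aeval x (f i) = 0

section AuxLemmas


variable {K : Type*} [Field K]

lemma mem_span_X_pow_smul_iff (n : ℕ) (x : PowerSeries K) :
    x ∈ ((Ideal.span {PowerSeries.X} : Ideal (PowerSeries K)) ^ n •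
      (⊤ : Submodule (PowerSeries K) (PowerSeries K))) ↔
      ∀ i < n, PowerSeries.coeff i x = 0 := by
  rw [smul_eq_mul, Ideal.mul_top, Ideal.span_singleton_pow, Ideal.mem_span_singleton,
    PowerSeries.X_pow_dvd_iff]

instance psAdicComplete :
    IsAdicComplete (Ideal.span {PowerSeries.X} : Ideal (PowerSeries K)) (PowerSeries K) where
  haus' := by
    intro x hx
    ext i
    have := SModEq.sub_mem.mp (hx (i + 1))
    rw [sub_zero, mem_span_X_pow_smul_iff] at this
    simpa using this i (by omega)
  prec' := by
    intro f hf
    refine ⟨PowerSeries.mk fun n => PowerSeries.coeff n (f (n + 1)), fun n => ?_⟩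
    rw [SModEq.sub_mem, mem_span_X_pow_smul_iff]
    intro i hi
    have := SModEq.sub_mem.mp (hf (show i + 1 ≤ n by omega))
    rw [mem_span_X_pow_smul_iff] at this
    have h2 := this i (by omega)
    rw [map_sub] at h2 ⊢
    rw [PowerSeries.coeff_mk]
    rw [sub_eq_zero] at h2 ⊢
    exact h2.symm

lemma exists_root_of_simple (F : Polynomial (PowerSeries K)) (a₀ : PowerSeries K)
    (h0 : PowerSeries.constantCoeff (F.eval a₀) = 0)
    (h1 : PowerSeries.constantCoeff (F.derivative.eval a₀) ≠ 0) :
    ∃ y : PowerSeries K, F.eval y = 0 := by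
  classical
  set φ := (PowerSeries.constantCoeff : PowerSeries K →+* K) with hφ
  set G := Polynomial.taylor a₀ F with hG
  set b₀ := G.coeff 0 with hb₀
  have hb0 : G.coeff 0 = F.eval a₀ := Polynomial.taylor_coeff_zero a₀ F
  have hb1 : G.coeff 1 = F.derivative.eval a₀ := Polynomial.taylor_coeff_one a₀ F
  set c := φ (G.coeff 1) with hc
  have hcne : c ≠ 0 := by rw [hc, hb1]; exact h1
  by_cases hb : b₀ = 0
  · exact ⟨a₀, by
      rw [← hb0, ← hb₀]; exact hb⟩
  -- degree bookkeeping
  have hGc1 : G.coeff 1 ≠ 0 := fun h => hcne (by rw [hc, h, map_zero])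
  have hd1 : 1 ≤ G.natDegree := Polynomial.le_natDegree_of_ne_zero hGc1
  obtain ⟨e, he⟩ : ∃ e, G.natDegree = e + 1 := ⟨G.natDegree - 1, by omega⟩
  -- the monicized polynomial
  set M : Polynomial (PowerSeries K) :=
    Polynomial.X ^ (e + 1) +
      ∑ i ∈ Finset.range (e + 1), Polynomial.C (G.coeff (i + 1) * b₀ ^ i) *
        Polynomial.X ^ (e - i) with hM
  have hMonic : M.Monic := by
    apply Polynomial.monic_X_pow_add
    have : (∑ i ∈ Finset.range (e + 1), Polynomial.C (G.coeff (i + 1) * b₀ ^ i) *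
        Polynomial.X ^ (e - i)).degree ≤ (e : WithBot ℕ) := by
      refine (Polynomial.degree_sum_le _ _).trans ?_
      refine Finset.sup_le fun i hi => ?_
      refine (Polynomial.degree_C_mul_X_pow_le _ _).trans ?_
      exact_mod_cast Nat.sub_le e i
    exact this.trans_lt (by exact_mod_cast Nat.cast_lt.mpr (Nat.lt_succ_self e))
  set w : PowerSeries K := -G.coeff 1 with hw
  have hφb₀ : φ b₀ = 0 := by rw [hb₀, hb0]; exact h0
  have hMevalw : M.eval w = w ^ (e + 1) +
      ∑ i ∈ Finset.range (e + 1), G.coeff (i + 1) * b₀ ^ i * w ^ (e - i) := by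
    simp [hM, Polynomial.eval_finset_sum]
  have hMderiv : M.derivative.eval w =
      (e + 1 : ℕ) * w ^ e +
      ∑ i ∈ Finset.range (e + 1), G.coeff (i + 1) * b₀ ^ i * ((e - i : ℕ) * w ^ (e - i - 1)) := by
    rw [hM, Polynomial.derivative_add, Polynomial.derivative_X_pow, Polynomial.derivative_sum]
    simp only [Polynomial.derivative_C_mul_X_pow]
    simp [Polynomial.eval_finset_sum]
    exact Finset.sum_congr rfl fun i _ => by ring
  have hφw : φ w = -c := by rw [hw, map_neg, hc]
  have hMa : M.eval w ∈ Ideal.span ({PowerSeries.X} : Set (PowerSeries K)) := by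
    rw [Ideal.mem_span_singleton, PowerSeries.X_dvd_iff, hMevalw]
    rw [show PowerSeries.constantCoeff = φ from rfl]
    simp only [map_add, map_pow, map_sum, map_mul, hφw, hφb₀]
    rw [Finset.sum_eq_single 0 (fun b _ hb => by rw [zero_pow hb]; ring) (by simp)]
    simp only [← hc]
    simp [pow_succ]
    ring
  have hMdunit : IsUnit (M.derivative.eval w) := by
    rw [PowerSeries.isUnit_iff_constantCoeff, hMderiv]
    rw [show PowerSeries.constantCoeff = φ from rfl]
    simp only [map_add, map_mul, map_pow, map_sum, map_natCast, hφw, hφb₀]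
    rw [Finset.sum_eq_single 0 (fun b _ hb => by rw [zero_pow hb]; ring) (by simp)]
    rw [isUnit_iff_ne_zero]
    simp only [← hc]
    have hcc : (-c) ≠ 0 := neg_ne_zero.mpr hcne
    cases e with
    | zero => simp
    | succ e' =>
      have : ((e' + 1 + 1 : ℕ) : K) * (-c) ^ (e' + 1) +
          c * (0:K) ^ 0 * (((e' + 1 - 0 : ℕ) : K) * (-c) ^ (e' + 1 - 0 - 1)) =
          (-c) ^ (e' + 1) := by
        simp only [Nat.sub_zero, Nat.add_sub_cancel, pow_zero]
        push_cast
        rw [pow_succ]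
        ring
      rw [this]
      exact pow_ne_zero _ hcc
  obtain ⟨z, hz1, hz2⟩ :=
    HenselianRing.is_henselian (I := Ideal.span {(PowerSeries.X : PowerSeries K)})
      M hMonic w hMa (hMdunit.map _)
  have hφz : φ z = -c := by
    rw [Ideal.mem_span_singleton, PowerSeries.X_dvd_iff, map_sub,
      show PowerSeries.constantCoeff = φ from rfl] at hz2
    rw [sub_eq_zero.mp hz2, hφw]
  have hzunit : IsUnit z := PowerSeries.isUnit_iff_constantCoeff.mpr
    (by rw [hφz]; exact isUnit_iff_ne_zero.mpr (neg_ne_zero.mpr hcne))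
  obtain ⟨v, hv, -⟩ := isUnit_iff_exists.mp hzunit
  have hznz : z ≠ 0 := fun h => by
    rw [h, map_zero] at hφz
    exact hcne (neg_eq_zero.mp hφz.symm)
  refine ⟨b₀ * v + a₀, ?_⟩
  rw [← Polynomial.taylor_eval a₀ F (b₀ * v), ← hG]
  have hMz : M.eval z = z ^ (e + 1) +
      ∑ i ∈ Finset.range (e + 1), G.coeff (i + 1) * b₀ ^ i * z ^ (e - i) := by
    simp [hM, Polynomial.eval_finset_sum]
  have hsum : ∑ i ∈ Finset.range (e + 1), G.coeff (i + 1) * (b₀ * v) ^ (i + 1) * z ^ (e + 1)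
      = ∑ i ∈ Finset.range (e + 1), b₀ * (G.coeff (i + 1) * b₀ ^ i * z ^ (e - i)) := by
    refine Finset.sum_congr rfl fun i hi => ?_
    have hie : i ≤ e := Nat.lt_succ_iff.mp (Finset.mem_range.mp hi)
    have hsplit : z ^ (e + 1) = z ^ (i + 1) * z ^ (e - i) := by
      rw [← pow_add]; congr 1; omega
    have h2 : v ^ (i + 1) * z ^ (i + 1) = 1 := by
      rw [← mul_pow, mul_comm v z, hv, one_pow]
    calc G.coeff (i + 1) * (b₀ * v) ^ (i + 1) * z ^ (e + 1)
        = G.coeff (i + 1) * b₀ ^ (i + 1) * (v ^ (i + 1) * z ^ (i + 1)) * z ^ (e - i) := by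
          rw [hsplit]; ring
      _ = b₀ * (G.coeff (i + 1) * b₀ ^ i * z ^ (e - i)) := by
          rw [h2]; rw [pow_succ]; ring
  have hkey : G.eval (b₀ * v) * z ^ (e + 1) = b₀ * M.eval z := by
    rw [Polynomial.eval_eq_sum_range, he, Finset.sum_range_succ', hMz]
    rw [add_mul, Finset.sum_mul, mul_add, Finset.mul_sum, hsum, ← hb₀]
    ring
  rw [Polynomial.IsRoot] at hz1
  rw [hz1, mul_zero] at hkey
  exact (mul_eq_zero.mp hkey).resolve_right (pow_ne_zero _ hznz)


noncomputable def ccAlgHom (K : Type*) [Field K] : PowerSeries K →ₐ[K] K :=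
  { PowerSeries.constantCoeff with
    commutes' := fun r => by simp [PowerSeries.algebraMap_apply] }

@[simp] lemma ccAlgHom_apply (x : PowerSeries K) :
    ccAlgHom K x = PowerSeries.constantCoeff x := rfl

lemma deriv_swap (a : PowerSeries K) (p : MvPolynomial (Fin 2) K) :
    Polynomial.derivative (MvPolynomial.aeval ![Polynomial.C a, Polynomial.X] p)
      = MvPolynomial.aeval ![Polynomial.C a, Polynomial.X] (MvPolynomial.pderiv 1 p) := by
  induction p using MvPolynomial.induction_on with
  | C r => simp [MvPolynomial.aeval_C, Polynomial.algebraMap_apply]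
  | add p q hp hq => simp [hp, hq]
  | mul_X p i hp =>
    fin_cases i <;>
      · simp [Polynomial.derivative_mul, MvPolynomial.pderiv_mul, hp, MvPolynomial.pderiv_X]
        ring

lemma evalPoly_eq (a y : PowerSeries K) (p : MvPolynomial (Fin 2) K) :
    Polynomial.eval y (MvPolynomial.aeval ![Polynomial.C a, Polynomial.X] p)
      = MvPolynomial.aeval ![a, y] p := by
  have h := MvPolynomial.comp_aeval_apply (R := K)
    ((Polynomial.aeval y).restrictScalars K) (f := ![Polynomial.C a, Polynomial.X]) p
  have h2 : ((Polynomial.aeval y).restrictScalars K)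
      (MvPolynomial.aeval ![Polynomial.C a, Polynomial.X] p)
      = Polynomial.eval y (MvPolynomial.aeval ![Polynomial.C a, Polynomial.X] p) := by
    simp [Polynomial.coe_aeval_eq_eval]
  have hv : (fun i => (AlgHom.restrictScalars K (Polynomial.aeval y))
      (![Polynomial.C a, Polynomial.X] i)) = ![a, y] := by
    funext i; fin_cases i <;> simp
  rw [← h2, h, hv]

lemma cc_aeval (a : PowerSeries K) (ha : PowerSeries.constantCoeff a = 0)
    (p : MvPolynomial (Fin 2) K) (y : K) :
    PowerSeries.constantCoeff (MvPolynomial.aeval ![a, PowerSeries.C y] p)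
      = MvPolynomial.eval ![0, y] p := by
  have h := MvPolynomial.comp_aeval_apply (ccAlgHom K) (f := ![a, PowerSeries.C y]) p
  rw [show PowerSeries.constantCoeff (MvPolynomial.aeval ![a, PowerSeries.C y] p)
      = ccAlgHom K (MvPolynomial.aeval ![a, PowerSeries.C y] p) from rfl, h]
  have hv : (fun i => ccAlgHom K (![a, PowerSeries.C y] i)) = ![(0 : K), y] := by
    funext i; fin_cases i <;> simp [ha]
  rw [hv, show MvPolynomial.eval ![0, y] p = MvPolynomial.aeval ![0, y] p from rfl]

lemma point_on_curve (f : MvPolynomial (Fin 2) K) (y₀ : K)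
    (hroot : MvPolynomial.eval ![0, y₀] f = 0)
    (hsimple : MvPolynomial.eval ![0, y₀] (MvPolynomial.pderiv 1 f) ≠ 0)
    (a : PowerSeries K) (ha : PowerSeries.constantCoeff a = 0) :
    ∃ y : PowerSeries K, MvPolynomial.aeval ![a, y] f = 0 := by
  obtain ⟨y, hy⟩ := exists_root_of_simple
    (MvPolynomial.aeval ![Polynomial.C a, Polynomial.X] f) (PowerSeries.C y₀)
    (by rw [evalPoly_eq, cc_aeval a ha, hroot])
    (by rw [deriv_swap, evalPoly_eq, cc_aeval a ha]; exact hsimple)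
  exact ⟨y, by rw [← evalPoly_eq]; exact hy⟩


noncomputable def psToLaurent (K : Type*) [Field K] : PowerSeries K →ₐ[K] LaurentSeries K :=
  { HahnSeries.ofPowerSeries ℤ K with
    commutes' := fun r => by
      simp [PowerSeries.algebraMap_apply, HahnSeries.algebraMap_apply'] }

@[simp] lemma psToLaurent_apply (x : PowerSeries K) :
    psToLaurent K x = HahnSeries.ofPowerSeries ℤ K x := rfl

lemma laurent_aeval (a y : PowerSeries K) (p : MvPolynomial (Fin 2) K) :
    MvPolynomial.aeval ![psToLaurent K a, psToLaurent K y] p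
      = psToLaurent K (MvPolynomial.aeval ![a, y] p) := by
  have h := MvPolynomial.comp_aeval_apply (φ := psToLaurent K) (f := ![a, y]) (p := p)
  have hv : (fun i => psToLaurent K (![a, y] i)) = ![psToLaurent K a, psToLaurent K y] := by
    funext i; fin_cases i <;> simp
  rw [h, hv]

end AuxLemmas

/-- Let `K` be an ample field, `f ∈ K[X,Y]` an absolutely irreducible polynomial
(variables `X = X 0`, `Y = X 1`), and `y₀ ∈ K` with `f (0, y₀) = 0` and
`(∂f/∂Y)(0, y₀) ≠ 0`.  Let `C : f(x,y) = 0` be the corresponding affine plane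
curve and `π (x,y) = x` the first projection.  Then
`K = { x₁/x₂ : (x₁,y₁), (x₂,y₂) ∈ C(K), x₂ ≠ 0 }`, i.e. every element of `K` is
a quotient of two first coordinates of `K`-rational points of `C`. -/
theorem stmt_3 {K : Type*} [Field K] (hK : IsAmpleField K)
    (f : MvPolynomial (Fin 2) K)
    (hirr : Irreducible (MvPolynomial.map (algebraMap K (AlgebraicClosure K)) f))
    (y₀ : K) (hroot : eval ![0, y₀] f = 0)
    (hsimple : eval ![0, y₀] (pderiv 1 f) ≠ 0) :
    (Set.univ : Set K) =
      { c : K | ∃ x₁ y₁ x₂ y₂ : K,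
          eval ![x₁, y₁] f = 0 ∧ eval ![x₂, y₂] f = 0 ∧ x₂ ≠ 0 ∧ c = x₁ / x₂ } := by
  symm
  rw [Set.eq_univ_iff_forall]
  intro c
  set g : Fin 3 → MvPolynomial (Fin 4) K :=
    ![MvPolynomial.aeval ![MvPolynomial.C c * MvPolynomial.X 0, MvPolynomial.X 1] f,
      MvPolynomial.aeval ![MvPolynomial.X 0, MvPolynomial.X 2] f,
      MvPolynomial.X 0 * MvPolynomial.X 3 - 1] with hg
  have hexist : ∃ x : Fin 4 → LaurentSeries K, ∀ i, MvPolynomial.aeval x (g i) = 0 := by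
    obtain ⟨y1, hy1⟩ := point_on_curve f y₀ hroot hsimple
      (PowerSeries.C c * PowerSeries.X) (by simp)
    obtain ⟨y2, hy2⟩ := point_on_curve f y₀ hroot hsimple PowerSeries.X (by simp)
    have hXne : psToLaurent K PowerSeries.X ≠ 0 := by
      simp only [psToLaurent_apply]
      exact (map_ne_zero_iff _ HahnSeries.ofPowerSeries_injective).mpr PowerSeries.X_ne_zero
    refine ⟨![psToLaurent K PowerSeries.X, psToLaurent K y1, psToLaurent K y2,
      (psToLaurent K PowerSeries.X)⁻¹], fun i => ?_⟩
    fin_cases i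
    · show MvPolynomial.aeval _ (MvPolynomial.aeval _ f) = 0
      rw [MvPolynomial.comp_aeval_apply
        (φ := MvPolynomial.aeval ![psToLaurent K PowerSeries.X, psToLaurent K y1,
          psToLaurent K y2, (psToLaurent K PowerSeries.X)⁻¹])
        (f := ![MvPolynomial.C c * MvPolynomial.X 0, MvPolynomial.X 1]) (p := f)]
      have hv : (fun i => MvPolynomial.aeval
          ![psToLaurent K PowerSeries.X, psToLaurent K y1, psToLaurent K y2,
            (psToLaurent K PowerSeries.X)⁻¹]
          (![MvPolynomial.C c * MvPolynomial.X 0, MvPolynomial.X 1] i))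
          = ![psToLaurent K (PowerSeries.C c * PowerSeries.X), psToLaurent K y1] := by
        funext i
        fin_cases i
        · show MvPolynomial.aeval _ (MvPolynomial.C c * MvPolynomial.X 0)
            = psToLaurent K (PowerSeries.C c * PowerSeries.X)
          rw [map_mul, map_mul, MvPolynomial.aeval_C, MvPolynomial.aeval_X]
          congr 1
        · simp
      rw [hv, laurent_aeval, hy1, map_zero]
    · show MvPolynomial.aeval _ (MvPolynomial.aeval _ f) = 0
      rw [MvPolynomial.comp_aeval_apply
        (φ := MvPolynomial.aeval ![psToLaurent K PowerSeries.X, psToLaurent K y1,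
          psToLaurent K y2, (psToLaurent K PowerSeries.X)⁻¹])
        (f := ![MvPolynomial.X 0, MvPolynomial.X 2]) (p := f)]
      have hv : (fun i => MvPolynomial.aeval
          ![psToLaurent K PowerSeries.X, psToLaurent K y1, psToLaurent K y2,
            (psToLaurent K PowerSeries.X)⁻¹]
          (![(MvPolynomial.X 0 : MvPolynomial (Fin 4) K), MvPolynomial.X 2] i))
          = ![psToLaurent K PowerSeries.X, psToLaurent K y2] := by
        funext i; fin_cases i <;> simp
      rw [hv, laurent_aeval, hy2, map_zero]
    · show MvPolynomial.aeval _ (MvPolynomial.X 0 * MvPolynomial.X 3 - 1) = 0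
      simp [mul_inv_cancel₀ hXne]
  obtain ⟨x, hx⟩ := hK 4 3 g hexist
  have h0 := hx 0
  have h1 := hx 1
  have h2 := hx 2
  simp only [hg, Matrix.cons_val_zero, Matrix.cons_val_one, Matrix.head_cons,
    Matrix.cons_val_two, Matrix.tail_cons] at h0 h1 h2
  have h2' : x 0 * x 3 = 1 := by
    have : MvPolynomial.aeval x (MvPolynomial.X 0 * MvPolynomial.X 3 - 1
        : MvPolynomial (Fin 4) K) = x 0 * x 3 - 1 := by simp
    rw [this] at h2
    exact sub_eq_zero.mp h2
  have hx0 : x 0 ≠ 0 := left_ne_zero_of_mul_eq_one h2'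
  have e0 : MvPolynomial.eval ![c * x 0, x 1] f = 0 := by
    rw [MvPolynomial.comp_aeval_apply (φ := MvPolynomial.aeval x)
      (f := ![MvPolynomial.C c * MvPolynomial.X 0, MvPolynomial.X 1]) (p := f)] at h0
    have hv : (fun i => MvPolynomial.aeval x
        (![MvPolynomial.C c * MvPolynomial.X 0, MvPolynomial.X 1] i)) = ![c * x 0, x 1] := by
      funext i; fin_cases i <;> simp
    rw [hv] at h0
    exact h0
  have e1 : MvPolynomial.eval ![x 0, x 2] f = 0 := by
    rw [MvPolynomial.comp_aeval_apply (φ := MvPolynomial.aeval x)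
      (f := ![MvPolynomial.X 0, MvPolynomial.X 2]) (p := f)] at h1
    have hv : (fun i => MvPolynomial.aeval x
        (![(MvPolynomial.X 0 : MvPolynomial (Fin 4) K), MvPolynomial.X 2] i)) = ![x 0, x 2] := by
      funext i; fin_cases i <;> simp
    rw [hv] at h1
    exact h1
  exact ⟨c * x 0, x 1, x 0, x 2, e0, e1, hx0, (mul_div_cancel_right₀ c hx0).symm⟩
end

section
/- A purely transcendental proper extension of a field is never an ample field; that is, if K = K₀(T) for some field K₀ and a nonempty set T of elements algebraically independent over K₀, then K is not ample. -/
open MvPolynomial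

section PartB
open Polynomial UniqueFactorizationMonoid UniqueFactorizationDomain


variable {F : Type*} [Field F]

private lemma deriv_of_pow_deriv {n : ℕ} (hnF : (n : F) ≠ 0) {A : F[X]}
    (hA : A ≠ 0) (h : derivative (A ^ n) = 0) : derivative A = 0 := by
  rw [Polynomial.derivative_pow] at h
  rcases mul_eq_zero.mp h with h | h
  · rcases mul_eq_zero.mp h with h | h
    · exact absurd h (by simpa only [Ne, Polynomial.C_eq_zero] using hnF)
    · exact absurd h (pow_ne_zero _ hA)
  · exact h

private lemma keyAux {n : ℕ} (hn : 3 ≤ n) (hnF : (n : F) ≠ 0) :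
    ∀ N m : ℕ, ∀ A B C : F[X], A.natDegree + B.natDegree + C.natDegree ≤ N →
      ¬ n ∣ m → ¬ (Polynomial.X ∣ C) → C ≠ 0 → A ^ n + B ^ n = Polynomial.X ^ m * C ^ n → False := by
  classical
  intro N
  induction N using Nat.strong_induction_on with
  | _ N IH =>
  intro m A B C hdeg hm hXC hC heq
  have hn0 : 0 < n := by omega
  have hm0 : m ≠ 0 := fun h => hm (h ▸ dvd_zero n)
  have hCn : C ^ n ≠ 0 := pow_ne_zero _ hC
  have hXm : (Polynomial.X : F[X]) ^ m ≠ 0 := pow_ne_zero _ Polynomial.X_ne_zero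
  have hRHS : (Polynomial.X : F[X]) ^ m * C ^ n ≠ 0 := mul_ne_zero hXm hCn
  have hmulX : ∀ P : F[X], P ≠ 0 → (Polynomial.X * P).natDegree = P.natDegree + 1 := by
    intro P hP
    rw [Polynomial.natDegree_mul Polynomial.X_ne_zero hP, Polynomial.natDegree_X]; omega
  have hmulXle : ∀ P : F[X], P.natDegree ≤ (Polynomial.X * P).natDegree := by
    intro P
    by_cases hP : P = 0
    · simp [hP]
    · rw [hmulX P hP]; omega
  by_cases hXAB : Polynomial.X ∣ A ∧ Polynomial.X ∣ B
  · obtain ⟨⟨A₁, rfl⟩, ⟨B₁, rfl⟩⟩ := hXAB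
    have hAB0 : A₁ ≠ 0 ∨ B₁ ≠ 0 := by
      by_contra h
      push_neg at h
      obtain ⟨h1, h2⟩ := h
      rw [h1, h2] at heq
      simp only [mul_zero, zero_pow hn0.ne', add_zero] at heq
      exact hRHS heq.symm
    rcases le_or_gt n m with hle | hlt
    · have heq' : A₁ ^ n + B₁ ^ n = Polynomial.X ^ (m - n) * C ^ n := by
        apply mul_left_cancel₀ (pow_ne_zero n (Polynomial.X_ne_zero (R := F)))
        calc (Polynomial.X : F[X]) ^ n * (A₁ ^ n + B₁ ^ n) = (Polynomial.X * A₁) ^ n + (Polynomial.X * B₁) ^ n := by ring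
        _ = Polynomial.X ^ m * C ^ n := heq
        _ = Polynomial.X ^ n * (Polynomial.X ^ (m - n) * C ^ n) := by rw [← mul_assoc, ← pow_add]; congr 2; omega
      have hm' : ¬ n ∣ (m - n) := by
        intro h
        exact hm (by
          have : m = (m - n) + n := by omega
          rw [this]; exact dvd_add h dvd_rfl)
      have hlt' : A₁.natDegree + B₁.natDegree + C.natDegree < N := by
        have l1 := hmulXle A₁
        have l2 := hmulXle B₁
        rcases hAB0 with h | h
        · have := hmulX A₁ h; omega
        · have := hmulX B₁ h; omega
      exact IH _ hlt' (m - n) A₁ B₁ C le_rfl hm' hXC hC heq'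
    · have heq' : C ^ n = Polynomial.X ^ (n - m) * (A₁ ^ n + B₁ ^ n) := by
        apply mul_left_cancel₀ hXm
        calc (Polynomial.X : F[X]) ^ m * C ^ n = (Polynomial.X * A₁) ^ n + (Polynomial.X * B₁) ^ n := heq.symm
        _ = Polynomial.X ^ m * (Polynomial.X ^ (n - m) * (A₁ ^ n + B₁ ^ n)) := by
            rw [← mul_assoc, ← pow_add]
            have : m + (n - m) = n := by omega
            rw [this]; ring
      have : (Polynomial.X : F[X]) ∣ C ^ n := by
        rw [heq']
        exact dvd_mul_of_dvd_left (dvd_pow_self Polynomial.X (by omega)) _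
      exact hXC (Polynomial.prime_X.dvd_of_dvd_pow this)
  push_neg at hXAB
  have hA : A ≠ 0 := by
    rintro rfl
    have h0 : B ^ n = Polynomial.X ^ m * C ^ n := by simpa [zero_pow hn0.ne'] using heq
    have hXB : Polynomial.X ∣ B := Polynomial.prime_X.dvd_of_dvd_pow
      (h0 ▸ dvd_mul_of_dvd_left (dvd_pow_self Polynomial.X hm0) _)
    exact hXAB (dvd_zero Polynomial.X) hXB
  have hB : B ≠ 0 := by
    rintro rfl
    have h0 : A ^ n = Polynomial.X ^ m * C ^ n := by simpa [zero_pow hn0.ne'] using heq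
    have hXA : Polynomial.X ∣ A := Polynomial.prime_X.dvd_of_dvd_pow
      (h0 ▸ dvd_mul_of_dvd_left (dvd_pow_self Polynomial.X hm0) _)
    exact hXAB hXA (dvd_zero Polynomial.X)
  by_cases hcop : IsCoprime A B
  swap
  · -- common prime factor
    have hgu : ¬ IsUnit (EuclideanDomain.gcd A B) := fun h =>
      hcop (EuclideanDomain.gcd_isUnit_iff.mp h)
    have hgne : EuclideanDomain.gcd A B ≠ 0 := fun h =>
      hA (EuclideanDomain.gcd_eq_zero_iff.mp h).1
    obtain ⟨q, hq_irr, hq_dvd⟩ := WfDvdMonoid.exists_irreducible_factor hgu hgne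
    have hq : Prime q := UniqueFactorizationMonoid.irreducible_iff_prime.mp hq_irr
    have hqA : q ∣ A := hq_dvd.trans (EuclideanDomain.gcd_dvd_left A B)
    have hqB : q ∣ B := hq_dvd.trans (EuclideanDomain.gcd_dvd_right A B)
    have hqC : q ∣ C := by
      have h1 : q ∣ Polynomial.X ^ m * C ^ n := by
        rw [← heq]
        exact dvd_add (hqA.trans (dvd_pow_self A hn0.ne')) (hqB.trans (dvd_pow_self B hn0.ne'))
      rcases hq.dvd_mul.mp h1 with h | h
      · exfalso
        have hqX : q ∣ Polynomial.X := hq.dvd_of_dvd_pow h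
        have hassoc : Associated q Polynomial.X := hq_irr.associated_of_dvd Polynomial.irreducible_X hqX
        exact hXAB (hassoc.symm.dvd.trans hqA) (hassoc.symm.dvd.trans hqB)
      · exact hq.dvd_of_dvd_pow h
    obtain ⟨A₁, rfl⟩ := hqA
    obtain ⟨B₁, rfl⟩ := hqB
    obtain ⟨C₁, rfl⟩ := hqC
    have hq0 : q ≠ 0 := hq.ne_zero
    have hA₁ : A₁ ≠ 0 := right_ne_zero_of_mul hA
    have hB₁ : B₁ ≠ 0 := right_ne_zero_of_mul hB
    have hC₁ : C₁ ≠ 0 := right_ne_zero_of_mul hC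
    have heq' : A₁ ^ n + B₁ ^ n = Polynomial.X ^ m * C₁ ^ n := by
      apply mul_left_cancel₀ (pow_ne_zero n hq0)
      calc q ^ n * (A₁ ^ n + B₁ ^ n) = (q * A₁) ^ n + (q * B₁) ^ n := by ring
      _ = Polynomial.X ^ m * (q * C₁) ^ n := heq
      _ = q ^ n * (Polynomial.X ^ m * C₁ ^ n) := by ring
    have hXC₁ : ¬ Polynomial.X ∣ C₁ := fun h => hXC (h.mul_left q)
    have hq1 : 1 ≤ q.natDegree := by
      rcases Nat.eq_zero_or_pos q.natDegree with h | h
      · exfalso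
        have := Polynomial.eq_C_of_natDegree_eq_zero h
        apply hq.not_unit
        rw [this]
        exact Polynomial.isUnit_C.mpr (isUnit_iff_ne_zero.mpr (fun hc => hq0 (by rw [this, hc, map_zero])))
      · exact h
    have hlt' : A₁.natDegree + B₁.natDegree + C₁.natDegree < N := by
      have e1 : (q * A₁).natDegree = q.natDegree + A₁.natDegree := Polynomial.natDegree_mul hq0 hA₁
      have e2 : (q * B₁).natDegree = q.natDegree + B₁.natDegree := Polynomial.natDegree_mul hq0 hB₁
      have e3 : (q * C₁).natDegree = q.natDegree + C₁.natDegree := Polynomial.natDegree_mul hq0 hC₁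
      omega
    exact IH _ hlt' m A₁ B₁ C₁ le_rfl hm hXC₁ hC₁ heq'
  by_cases hconst : A.natDegree = 0 ∧ B.natDegree = 0
  · have h1 : (A ^ n + B ^ n).natDegree = 0 := by
      have h2 := Polynomial.natDegree_add_le (A ^ n) (B ^ n)
      rw [Polynomial.natDegree_pow, Polynomial.natDegree_pow, hconst.1, hconst.2] at h2
      omega
    rw [heq, Polynomial.natDegree_mul hXm hCn, Polynomial.natDegree_X_pow, Polynomial.natDegree_pow] at h1
    omega
  · -- Mason-Stothers
    have hABn : IsCoprime (A ^ n) (B ^ n) := hcop.pow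
    have hAc : IsCoprime (A ^ n) (Polynomial.X ^ m * C ^ n) := by
      have h := hABn.add_mul_left_right 1
      rw [mul_one, add_comm (B ^ n), heq] at h
      exact h
    have hBc : IsCoprime (B ^ n) (Polynomial.X ^ m * C ^ n) := by
      have h := hABn.symm.add_mul_left_right 1
      rw [mul_one, heq] at h
      exact h
    have habc := Polynomial.abc (pow_ne_zero n hA) (pow_ne_zero n hB)
      (neg_ne_zero.mpr hRHS) hABn
      (by rw [heq]; ring)
    rcases habc with ⟨h1, h2, h3⟩ | ⟨d1, d2, d3⟩
    · have hXCn : IsCoprime ((Polynomial.X : F[X]) ^ m) (C ^ n) :=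
        ((Polynomial.irreducible_X.coprime_iff_not_dvd).mpr hXC).pow
      have e1 : A ^ n * B ^ n * -(Polynomial.X ^ m * C ^ n) = -(A ^ n * B ^ n * (Polynomial.X ^ m * C ^ n)) := by ring
      have e2 : radical (A ^ n * B ^ n * -(Polynomial.X ^ m * C ^ n))
          = radical A * radical B * (radical ((Polynomial.X:F[X]) ^ m) * radical (C ^ n)) := by
        rw [e1, radical_neg, radical_mul (hAc.mul_left hBc).isRelPrime, radical_mul hABn.isRelPrime,
          radical_mul hXCn.isRelPrime, radical_pow A hn0.ne', radical_pow B hn0.ne']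
      have bA : (radical A).natDegree ≤ A.natDegree :=
        Polynomial.natDegree_le_of_dvd ((radical_dvd_self (a := A))) hA
      have bB : (radical B).natDegree ≤ B.natDegree :=
        Polynomial.natDegree_le_of_dvd ((radical_dvd_self (a := B))) hB
      have bC : (radical (C ^ n)).natDegree ≤ C.natDegree := by
        rw [radical_pow C hn0.ne']
        exact Polynomial.natDegree_le_of_dvd ((radical_dvd_self (a := C))) hC
      have bX : (radical ((Polynomial.X : F[X]) ^ m)).natDegree ≤ 1 := by
        rw [radical_pow (Polynomial.X : F[X]) (by omega : m ≠ 0)]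
        calc (radical (Polynomial.X : F[X])).natDegree ≤ (Polynomial.X : F[X]).natDegree :=
            Polynomial.natDegree_le_of_dvd ((radical_dvd_self (a := Polynomial.X))) Polynomial.X_ne_zero
        _ = 1 := Polynomial.natDegree_X
      have hrdeg : (radical (A ^ n * B ^ n * -(Polynomial.X ^ m * C ^ n))).natDegree
          ≤ A.natDegree + B.natDegree + (1 + C.natDegree) := by
        rw [e2, Polynomial.natDegree_mul (mul_ne_zero ((radical_ne_zero (a := A))) ((radical_ne_zero (a := B))))
          (mul_ne_zero ((radical_ne_zero (a := _))) ((radical_ne_zero (a := _)))),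
          Polynomial.natDegree_mul ((radical_ne_zero (a := A))) ((radical_ne_zero (a := B))),
          Polynomial.natDegree_mul ((radical_ne_zero (a := _))) ((radical_ne_zero (a := _)))]
        omega
      rw [Polynomial.natDegree_pow] at h1 h2
      rw [Polynomial.natDegree_neg, Polynomial.natDegree_mul hXm hCn, Polynomial.natDegree_X_pow, Polynomial.natDegree_pow] at h3
      have g1 : 3 * A.natDegree ≤ n * A.natDegree := Nat.mul_le_mul_right _ hn
      have g2 : 3 * B.natDegree ≤ n * B.natDegree := Nat.mul_le_mul_right _ hn
      have g3 : 3 * C.natDegree ≤ n * C.natDegree := Nat.mul_le_mul_right _ hn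
      omega
    · have dA : derivative A = 0 := deriv_of_pow_deriv hnF hA d1
      have dB : derivative B = 0 := deriv_of_pow_deriv hnF hB d2
      have dXC : derivative (Polynomial.X ^ m * C ^ n) = 0 := by
        rw [Polynomial.derivative_neg, neg_eq_zero] at d3
        exact d3
      have hkey : Polynomial.C (m : F) * C ^ n
          + Polynomial.X * (Polynomial.C (n : F) * C ^ (n - 1) * derivative C) = 0 := by
        have hxm : (Polynomial.X : F[X]) ^ m = Polynomial.X ^ (m - 1) * Polynomial.X := by
          rw [← pow_succ]; congr 1; omega
        have h0 : derivative (Polynomial.X ^ m * C ^ n)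
            = Polynomial.X ^ (m - 1) * (Polynomial.C (m : F) * C ^ n
              + Polynomial.X * (Polynomial.C (n : F) * C ^ (n - 1) * derivative C)) := by
          rw [Polynomial.derivative_mul, Polynomial.derivative_X_pow, Polynomial.derivative_pow]
          conv_lhs => rw [hxm]
          ring
        rw [h0] at dXC
        rcases mul_eq_zero.mp dXC with h | h
        · exact absurd h (pow_ne_zero _ Polynomial.X_ne_zero)
        · exact h
      have hC0 : Polynomial.eval 0 C ≠ 0 := by
        rw [← Polynomial.coeff_zero_eq_eval_zero]
        exact fun h => hXC (Polynomial.X_dvd_iff.mpr h)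
      have hmF : (m : F) = 0 := by
        have h := congrArg (Polynomial.eval 0) hkey
        simp only [Polynomial.eval_add, Polynomial.eval_mul, Polynomial.eval_C, Polynomial.eval_pow, Polynomial.eval_X, zero_mul, add_zero,
          Polynomial.eval_zero] at h
        rcases mul_eq_zero.mp h with h | h
        · exact h
        · exact absurd h (pow_ne_zero _ hC0)
      have hdC : derivative C = 0 := by
        rw [hmF, map_zero, zero_mul, zero_add] at hkey
        rcases mul_eq_zero.mp hkey with h | h
        · exact absurd h Polynomial.X_ne_zero
        · rcases mul_eq_zero.mp h with h | h
          · rcases mul_eq_zero.mp h with h | h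
            · exact absurd h (by simpa only [Ne, Polynomial.C_eq_zero] using hnF)
            · exact absurd h (pow_ne_zero _ hC)
          · exact h
      set p := ringChar F with hp
      have hpm : p ∣ m := (CharP.cast_eq_zero_iff F p m).mp hmF
      have hp0 : p ≠ 0 := by
        rintro h
        rw [h] at hpm
        exact hm0 (zero_dvd_iff.mp hpm)
      have hp2 : 2 ≤ p := ((CharP.char_is_prime_or_zero F p).resolve_right hp0).two_le
      have hppos : 0 < p := by omega
      have hA2 : Polynomial.expand F p (Polynomial.contract p A) = A := Polynomial.expand_contract p dA hp0
      have hB2 : Polynomial.expand F p (Polynomial.contract p B) = B := Polynomial.expand_contract p dB hp0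
      have hC2 : Polynomial.expand F p (Polynomial.contract p C) = C := Polynomial.expand_contract p hdC hp0
      obtain ⟨m₁, rfl⟩ := hpm
      set A₂ := Polynomial.contract p A
      set B₂ := Polynomial.contract p B
      set C₂ := Polynomial.contract p C
      have hRHSexp : Polynomial.expand F p (Polynomial.X ^ m₁ * C₂ ^ n) = Polynomial.X ^ (p * m₁) * C ^ n := by
        rw [map_mul, map_pow, map_pow, Polynomial.expand_X, hC2, ← pow_mul]
      have heq₂ : A₂ ^ n + B₂ ^ n = Polynomial.X ^ m₁ * C₂ ^ n := by
        apply Polynomial.expand_injective hppos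
        rw [map_add, map_pow, map_pow, hA2, hB2, hRHSexp, heq]
      have hm₁ : ¬ n ∣ m₁ := fun h => hm (h.mul_left p)
      have hC₂ : C₂ ≠ 0 := fun h => hC (by rw [← hC2, h, map_zero])
      have hXC₂ : ¬ Polynomial.X ∣ C₂ := by
        intro h
        apply hXC
        rw [Polynomial.X_dvd_iff] at h ⊢
        rw [← hC2, Polynomial.coeff_expand hppos]
        simpa using h
      have eA : A.natDegree = A₂.natDegree * p := by
        conv_lhs => rw [← hA2]
        exact Polynomial.natDegree_expand p A₂
      have eB : B.natDegree = B₂.natDegree * p := by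
        conv_lhs => rw [← hB2]
        exact Polynomial.natDegree_expand p B₂
      have eC : C.natDegree = C₂.natDegree * p := by
        conv_lhs => rw [← hC2]
        exact Polynomial.natDegree_expand p C₂
      have hlt' : A₂.natDegree + B₂.natDegree + C₂.natDegree < N := by
        have hAB : A.natDegree ≠ 0 ∨ B.natDegree ≠ 0 := by
          by_contra h
          push_neg at h
          exact hconst ⟨h.1, h.2⟩
        have l1 : A₂.natDegree ≤ A₂.natDegree * p := Nat.le_mul_of_pos_right _ hppos
        have l2 : B₂.natDegree ≤ B₂.natDegree * p := Nat.le_mul_of_pos_right _ hppos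
        have l3 : C₂.natDegree ≤ C₂.natDegree * p := Nat.le_mul_of_pos_right _ hppos
        have l4 : A₂.natDegree ≠ 0 → A₂.natDegree < A₂.natDegree * p := fun h =>
          lt_of_lt_of_le (by omega) (Nat.mul_le_mul_left _ hp2)
        have l5 : B₂.natDegree ≠ 0 → B₂.natDegree < B₂.natDegree * p := fun h =>
          lt_of_lt_of_le (by omega) (Nat.mul_le_mul_left _ hp2)
        rcases hAB with h | h
        · have : A₂.natDegree ≠ 0 := by
            intro h0; rw [eA, h0, zero_mul] at h; exact h rfl
          have := l4 this
          omega
        · have : B₂.natDegree ≠ 0 := by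
            intro h0; rw [eB, h0, zero_mul] at h; exact h rfl
          have := l5 this
          omega
      exact IH _ hlt' m₁ A₂ B₂ C₂ le_rfl hm₁ hXC₂ hC₂ heq₂

private lemma exists_X_pow_factor (C : F[X]) (hC : C ≠ 0) :
    ∃ r : ℕ, ∃ D : F[X], ¬ Polynomial.X ∣ D ∧ C = Polynomial.X ^ r * D := by
  suffices h : ∀ N (C : F[X]), C.natDegree ≤ N → C ≠ 0 →
      ∃ r : ℕ, ∃ D : F[X], ¬ Polynomial.X ∣ D ∧ C = Polynomial.X ^ r * D from h _ C le_rfl hC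
  intro N
  induction N with
  | zero =>
    intro C hd hC
    by_cases h : Polynomial.X ∣ C
    · obtain ⟨C₁, rfl⟩ := h
      have hC₁ : C₁ ≠ 0 := right_ne_zero_of_mul hC
      rw [Polynomial.natDegree_mul Polynomial.X_ne_zero hC₁, Polynomial.natDegree_X] at hd
      omega
    · exact ⟨0, C, h, by simp⟩
  | succ N IH =>
    intro C hd hC
    by_cases h : Polynomial.X ∣ C
    · obtain ⟨C₁, rfl⟩ := h
      have hC₁ : C₁ ≠ 0 := right_ne_zero_of_mul hC
      have hd' : C₁.natDegree ≤ N := by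
        rw [Polynomial.natDegree_mul Polynomial.X_ne_zero hC₁, Polynomial.natDegree_X] at hd
        omega
      obtain ⟨r, D, hD, hEq⟩ := IH C₁ hd' hC₁
      exact ⟨r + 1, D, hD, by rw [hEq]; ring⟩
    · exact ⟨0, C, h, by simp⟩

private lemma key {n : ℕ} (hn : 3 ≤ n) (hnF : (n : F) ≠ 0) {m : ℕ} (hm : ¬ n ∣ m)
    {A B C : F[X]} (hC : C ≠ 0) (heq : A ^ n + B ^ n = Polynomial.X ^ m * C ^ n) : False := by
  obtain ⟨r, D, hD, rfl⟩ := exists_X_pow_factor C hC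
  have hD0 : D ≠ 0 := right_ne_zero_of_mul hC
  have heq' : A ^ n + B ^ n = Polynomial.X ^ (m + n * r) * D ^ n := by
    rw [heq, mul_pow, ← pow_mul, ← mul_assoc, ← pow_add]
    ring_nf
  exact keyAux hn hnF _ (m + n * r) A B D le_rfl
    (fun h => hm ((Nat.dvd_add_right (Dvd.intro r rfl)).mp (by rwa [Nat.add_comm] at h)))
    hD hD0 heq'

end PartB

section PartC

variable (K : Type*) [Field K]

private lemma mem_span_X_pow (k : ℕ) (f : PowerSeries K) :
    f ∈ (Ideal.span {(PowerSeries.X : PowerSeries K)}) ^ k ↔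
      ∀ i < k, PowerSeries.coeff i f = 0 := by
  rw [Ideal.span_singleton_pow, Ideal.mem_span_singleton]
  exact PowerSeries.X_pow_dvd_iff

private lemma powerSeries_isAdicComplete :
    IsAdicComplete (Ideal.span {(PowerSeries.X : PowerSeries K)}) (PowerSeries K) := by
  set I : Ideal (PowerSeries K) := Ideal.span {(PowerSeries.X : PowerSeries K)}
  have hsmul : ∀ k : ℕ, (I ^ k • ⊤ : Ideal (PowerSeries K)) = I ^ k := by
    intro k
    rw [← Ideal.one_eq_top, smul_eq_mul, mul_one]
  refine @IsAdicComplete.mk _ _ _ _ _ _ ?_ ?_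
  · constructor
    intro x hx
    ext i
    have h := hx (i + 1)
    rw [SModEq.zero, hsmul] at h
    rw [mem_span_X_pow] at h
    simpa using h i (by omega)
  · constructor
    intro f hf
    refine ⟨PowerSeries.mk fun i => PowerSeries.coeff i (f (i + 1)), fun n => ?_⟩
    rw [SModEq.sub_mem, hsmul, mem_span_X_pow]
    intro i hi
    rw [map_sub, PowerSeries.coeff_mk]
    have key : PowerSeries.coeff i (f n) = PowerSeries.coeff i (f (i + 1)) := by
      rcases le_total n (i + 1) with h | h
      · have := hf h
        rw [SModEq.sub_mem, hsmul, mem_span_X_pow] at this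
        have := this i hi
        rw [map_sub, sub_eq_zero] at this
        exact this
      · have := hf h
        rw [SModEq.sub_mem, hsmul, mem_span_X_pow] at this
        have := this i (by omega)
        rw [map_sub, sub_eq_zero] at this
        exact this.symm
    rw [key, sub_self]

private lemma exists_pow_root (t : K) (n : ℕ) (hn : n ≠ 0) (hnK : (n : K) ≠ 0) :
    ∃ c : PowerSeries K, c ^ n = 1 + PowerSeries.C t * PowerSeries.X ^ n := by
  haveI := powerSeries_isAdicComplete K
  set u : PowerSeries K := 1 + PowerSeries.C t * PowerSeries.X ^ n with hu
  obtain ⟨a, ha, -⟩ := HenselianRing.is_henselian (R := PowerSeries K)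
    (I := Ideal.span {(PowerSeries.X : PowerSeries K)})
    (Polynomial.X ^ n - Polynomial.C u) (Polynomial.monic_X_pow_sub_C u hn) 1
    (by
      rw [Polynomial.eval_sub, Polynomial.eval_pow, Polynomial.eval_X, Polynomial.eval_C,
        one_pow, hu]
      rw [Ideal.mem_span_singleton]
      have : (1 : PowerSeries K) - (1 + PowerSeries.C t * PowerSeries.X ^ n)
          = -(PowerSeries.C t * PowerSeries.X ^ n) := by ring
      rw [this, dvd_neg]
      exact ((dvd_pow_self _ hn).mul_left _))
    (by
      rw [Polynomial.derivative_sub, Polynomial.derivative_C, Polynomial.derivative_X_pow,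
        sub_zero, Polynomial.eval_mul, Polynomial.eval_pow, Polynomial.eval_X, one_pow,
        mul_one, Polynomial.eval_C]
      apply RingHom.isUnit_map
      rw [PowerSeries.isUnit_iff_constantCoeff, map_natCast]
      exact isUnit_iff_ne_zero.mpr hnK)
  refine ⟨a, ?_⟩
  have h := ha
  rw [Polynomial.IsRoot, Polynomial.eval_sub, Polynomial.eval_pow, Polynomial.eval_X,
    Polynomial.eval_C, sub_eq_zero] at h
  exact h

private lemma laurent_solution (t : K) (n : ℕ) (hn : n ≠ 0) (hodd : Odd n)
    (hnK : (n : K) ≠ 0) :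
    ∃ x y : LaurentSeries K, x ^ n + y ^ n = algebraMap K (LaurentSeries K) t := by
  obtain ⟨c, hc⟩ := exists_pow_root K t n hn hnK
  set φ := HahnSeries.ofPowerSeries ℤ K with hφ
  set z : LaurentSeries K := φ PowerSeries.X with hzdef
  have hz : z ≠ 0 := by
    rw [hzdef, hφ, HahnSeries.ofPowerSeries_X]
    exact HahnSeries.single_ne_zero one_ne_zero
  have halg : φ (PowerSeries.C t) = algebraMap K (LaurentSeries K) t := by
    rw [HahnSeries.algebraMap_apply', PowerSeries.algebraMap_apply, Algebra.algebraMap_self_apply]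
  have h1 : (φ c) ^ n = 1 + algebraMap K (LaurentSeries K) t * z ^ n := by
    rw [← map_pow, hc, map_add, map_one, map_mul, map_pow, halg]
  refine ⟨φ c * z⁻¹, -z⁻¹, ?_⟩
  have hzn : z ^ n ≠ 0 := pow_ne_zero _ hz
  have hneg : (-z⁻¹) ^ n = -(z⁻¹ ^ n) := hodd.neg_pow z⁻¹
  rw [mul_pow, h1, hneg, inv_pow]
  calc (1 + algebraMap K (LaurentSeries K) t * z ^ n) * (z ^ n)⁻¹ + -(z ^ n)⁻¹
      = algebraMap K (LaurentSeries K) t * (z ^ n * (z ^ n)⁻¹) := by ring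
  _ = algebraMap K (LaurentSeries K) t := by rw [mul_inv_cancel₀ hzn, mul_one]

end PartC

/-- **Purely transcendental proper extensions are not ample.**
If `K = K₀(T)` for a field `K₀` and a nonempty set `T` of elements of `K`
algebraically independent over `K₀`, then `K` is not an ample field. -/
theorem stmt_11 {K₀ K : Type*} [Field K₀] [Field K] [Algebra K₀ K]
    (T : Set K) (hT : T.Nonempty)
    (hind : AlgebraicIndependent K₀ ((↑) : T → K))
    (hgen : IntermediateField.adjoin K₀ T = ⊤) :
    ¬ IsAmpleField K := by
  classical
  intro hamp
  obtain ⟨t, htT⟩ := hT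
  -- choose an exponent n suitable for the characteristic
  obtain ⟨n, hn3, hodd, hnK₀⟩ : ∃ n : ℕ, 3 ≤ n ∧ Odd n ∧ (n : K₀) ≠ 0 := by
    by_cases h3 : (3 : K₀) = 0
    · have hdvd : ringChar K₀ ∣ 3 := (CharP.cast_eq_zero_iff K₀ (ringChar K₀) 3).mp h3
      have hchar : ringChar K₀ = 3 := by
        rcases (Nat.prime_three).eq_one_or_self_of_dvd _ hdvd with h | h
        · exact absurd h (CharP.ringChar_ne_one)
        · exact h
      refine ⟨5, by omega, by decide, fun h5 => ?_⟩
      have := (CharP.cast_eq_zero_iff K₀ (ringChar K₀) 5).mp h5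
      rw [hchar] at this
      norm_num at this
    · exact ⟨3, le_rfl, by decide, h3⟩
  have hnK : (n : K) ≠ 0 := fun h => hnK₀ ((algebraMap K₀ K).injective
    (by rw [map_natCast, map_zero, h]))
  obtain ⟨lx, ly, hl⟩ := laurent_solution K t n (by omega) hodd hnK
  -- the polynomial system
  set f : Fin 1 → MvPolynomial (Fin 2) K :=
    ![MvPolynomial.X 0 ^ n + MvPolynomial.X 1 ^ n - MvPolynomial.C t] with hf
  obtain ⟨x, hx⟩ := hamp 2 1 f ⟨![lx, ly], by
    intro i
    rw [Subsingleton.elim i 0]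
    simp only [hf, Matrix.cons_val_zero, map_sub, map_add, map_pow, aeval_X, aeval_C,
      Matrix.cons_val_one, Matrix.head_cons]
    rw [hl, sub_self]⟩
  have hxy : x 0 ^ n + x 1 ^ n = t := by
    have h := hx 0
    simp only [hf, Matrix.cons_val_zero, map_sub, map_add, map_pow, aeval_X, aeval_C,
      sub_eq_zero] at h
    exact h
  -- fraction representation of elements of K
  set Φ : MvPolynomial T K₀ →ₐ[K₀] K := aeval ((↑) : T → K) with hΦdef
  have hΦinj : Function.Injective Φ := algebraicIndependent_iff_injective_aeval.mp hind
  have hrep : ∀ z : K, ∃ P Q : MvPolynomial T K₀, Φ Q ≠ 0 ∧ z * Φ Q = Φ P := by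
    intro z
    have hz : z ∈ IntermediateField.adjoin K₀ T := by rw [hgen]; trivial
    obtain ⟨r, s, hzz⟩ := (IntermediateField.mem_adjoin_iff K₀ z).mp hz
    by_cases hs : Φ s = 0
    · refine ⟨0, 1, by simp, ?_⟩
      rw [hzz]
      show (aeval Subtype.val r / aeval Subtype.val s) * Φ 1 = Φ 0
      have : aeval (Subtype.val : T → K) s = 0 := hs
      rw [this, div_zero, zero_mul, map_zero]
    · refine ⟨r, s, hs, ?_⟩
      rw [hzz]
      show (aeval Subtype.val r / aeval Subtype.val s) * Φ s = Φ r
      rw [div_mul_cancel₀]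
      exact hs
  obtain ⟨P₁, Q₁, hQ₁, hP₁⟩ := hrep (x 0)
  obtain ⟨P₂, Q₂, hQ₂, hP₂⟩ := hrep (x 1)
  set t₀ : T := ⟨t, htT⟩ with ht₀
  have hΦt : Φ (MvPolynomial.X t₀) = t := aeval_X _ t₀
  have hkeyK : Φ (P₁ ^ n * Q₂ ^ n + P₂ ^ n * Q₁ ^ n)
      = Φ (MvPolynomial.X t₀ * (Q₁ * Q₂) ^ n) := by
    rw [map_add, map_mul, map_mul, map_mul, map_pow, map_pow, map_pow, map_pow, map_pow, hΦt,
      map_mul]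
    calc (Φ P₁) ^ n * (Φ Q₂) ^ n + (Φ P₂) ^ n * (Φ Q₁) ^ n
        = (x 0 ^ n + x 1 ^ n) * ((Φ Q₁) * (Φ Q₂)) ^ n := by
          rw [← hP₁, ← hP₂]; ring
      _ = t * ((Φ Q₁) * (Φ Q₂)) ^ n := by rw [hxy]
  have hpoly : P₁ ^ n * Q₂ ^ n + P₂ ^ n * Q₁ ^ n
      = MvPolynomial.X t₀ * (Q₁ * Q₂) ^ n := hΦinj hkeyK
  -- transport to a polynomial ring over a field
  set ι₀ := {b : T // b ≠ t₀} with hι₀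
  set e : T ≃ Option ι₀ := (Equiv.optionSubtypeNe t₀).symm with he
  have het : e t₀ = none := Equiv.optionSubtypeNe_symm_self t₀
  set R₀ := MvPolynomial ι₀ K₀ with hR₀
  set Ψ : MvPolynomial T K₀ ≃ₐ[K₀] Polynomial R₀ :=
    (MvPolynomial.renameEquiv K₀ e).trans (MvPolynomial.optionEquivLeft K₀ ι₀) with hΨ
  have hΨX : Ψ (MvPolynomial.X t₀) = Polynomial.X := by
    rw [hΨ]
    simp only [AlgEquiv.trans_apply, MvPolynomial.renameEquiv_apply, MvPolynomial.rename_X, het]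
    exact MvPolynomial.optionEquivLeft_X_none K₀ ι₀
  set F := FractionRing R₀ with hF
  set Θ : MvPolynomial T K₀ →+* Polynomial F :=
    (Polynomial.mapRingHom (algebraMap R₀ F)).comp (Ψ : MvPolynomial T K₀ →+* Polynomial R₀)
    with hΘ
  have hΘinj : Function.Injective Θ := by
    rw [hΘ, RingHom.coe_comp]
    apply Function.Injective.comp
    · rw [Polynomial.coe_mapRingHom]
      exact Polynomial.map_injective _ (IsFractionRing.injective R₀ F)
    · exact fun a b hab => Ψ.injective hab
  have hΘX : Θ (MvPolynomial.X t₀) = Polynomial.X := by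
    rw [hΘ, RingHom.comp_apply]
    show Polynomial.mapRingHom (algebraMap R₀ F) (Ψ (MvPolynomial.X t₀)) = Polynomial.X
    rw [hΨX, Polynomial.coe_mapRingHom, Polynomial.map_X]
  have heqF : (Θ P₁ * Θ Q₂) ^ n + (Θ P₂ * Θ Q₁) ^ n
      = Polynomial.X ^ 1 * (Θ Q₁ * Θ Q₂) ^ n := by
    have h := congrArg Θ hpoly
    rw [map_add, map_mul, map_mul, map_mul, map_pow, map_pow, map_pow, map_pow, map_pow,
      hΘX, map_mul] at h
    rw [pow_one]
    calc (Θ P₁ * Θ Q₂) ^ n + (Θ P₂ * Θ Q₁) ^ n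
        = Θ P₁ ^ n * Θ Q₂ ^ n + Θ P₂ ^ n * Θ Q₁ ^ n := by ring
      _ = Polynomial.X * (Θ Q₁ * Θ Q₂) ^ n := h
  have hC : Θ Q₁ * Θ Q₂ ≠ 0 := by
    apply mul_ne_zero <;>
    · intro h
      first
        | exact hQ₁ (by rw [show Q₁ = 0 from hΘinj (by rw [h, map_zero]), map_zero])
        | exact hQ₂ (by rw [show Q₂ = 0 from hΘinj (by rw [h, map_zero]), map_zero])
  have hnF : (n : F) ≠ 0 := by
    intro h
    apply hnK₀
    have hg : Function.Injective ((algebraMap R₀ F).comp (MvPolynomial.C : K₀ →+* R₀)) :=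
      RingHom.injective _
    apply hg
    rw [map_natCast, map_zero, h]
  exact key hn3 hnF (fun h => by have := Nat.le_of_dvd one_pos h; omega) hC heqF
end
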